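/- Consider the closed-loop system of the power network with the distributed integral controller and an additional disturbance Q^l : [0,∞) → ℝⁿ with finite L² norm: η̇ = Dᵀω, Mω̇ = Q⁻¹θ − DΓ(V)sin(η) − Aω − P^l − Q^l(t), TV̇ = −E(η)V + Ē_fd, θ̇ = −L_comm·θ − Q⁻¹ω, where L_comm is the Laplacian of a connected communication graph, Q diagonal positive definite, P^l constant, and (η̄, 0, V̄, θ̄) the unperturbed equilibrium. Let Z(η, ω, V, θ) = ½ωᵀMω + W₂(η, V) + ½(θ − θ̄)ᵀ(θ − θ̄). Then for every ε with 0 < ε < 2·minᵢ Aᵢ, along any solution on [0,∞), Z(t) ≤ Z(0) + (1/(2ε))·∫₀^t ‖Q^l(s)‖² ds for all t ≥ 0; more precisely d/dt Z ≤ −ωᵀ(A − (ε/2)I)ω − (E(η)V − Ē_fd)ᵀT⁻¹(E(η)V − Ē_fd) − (θ − θ̄)ᵀL_comm(θ − θ̄) + (1/(2ε))‖Q^l(t)‖². -/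

import Mathlib

open Matrix Real Filter Topology Set

noncomputable section

/-- `Vec n` is `ℝⁿ`. -/
abbrev Vec (n : ℕ) := Fin n → ℝ

/-- Incidence matrix of the (undirected, arbitrarily oriented) graph whose `m` edges have
endpoints `ep1 k` (positive end) and `ep2 k` (negative end). -/
def incD {n m : ℕ} (ep1 ep2 : Fin m → Fin n) : Matrix (Fin n) (Fin m) ℝ :=
  Matrix.of fun i k => if i = ep1 k then 1 else if i = ep2 k then -1 else 0

/-- `Γ(V) = diag(γ₁,…,γ_m)`, `γ_k = V_i V_j B_{ij}` for edge `k = {i,j}`. -/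
def Gam {n m : ℕ} (ep1 ep2 : Fin m → Fin n) (B : Fin m → ℝ) (V : Vec n) :
    Matrix (Fin m) (Fin m) ℝ :=
  Matrix.diagonal fun k => V (ep1 k) * V (ep2 k) * B k

/-- The matrix `E(η)`. -/
def Emat {n m : ℕ} (ep1 ep2 : Fin m → Fin n) (B : Fin m → ℝ)
    (Bii Xd Xd' : Vec n) (η : Vec m) : Matrix (Fin n) (Fin n) ℝ :=
  Matrix.of fun i j =>
    if i = j then (1 - Bii i * (Xd i - Xd' i)) / (Xd i - Xd' i)
    else -∑ k, (if (ep1 k = i ∧ ep2 k = j) ∨ (ep1 k = j ∧ ep2 k = i)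
      then B k * Real.cos (η k) else 0)

/-- The diagonal matrix `F`. -/
def Fmat {n : ℕ} (Bii Xd Xd' : Vec n) : Matrix (Fin n) (Fin n) ℝ :=
  Matrix.diagonal fun i => (1 - Bii i * (Xd i - Xd' i)) / (Xd i - Xd' i)

/-- componentwise sine -/
def sinv {m : ℕ} (η : Vec m) : Vec m := fun k => Real.sin (η k)
/-- componentwise cosine -/
def cosv {m : ℕ} (η : Vec m) : Vec m := fun k => Real.cos (η k)

/-- The storage function `W₂` with reference point `(ηb, Vb)`. -/
def W2 {n m : ℕ} (ep1 ep2 : Fin m → Fin n) (B : Fin m → ℝ) (Bii Xd Xd' : Vec n)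
    (Efd : Vec n) (ηb : Vec m) (Vb : Vec n) (η : Vec m) (V : Vec n) : ℝ :=
  -((1 : Vec m) ⬝ᵥ (Gam ep1 ep2 B V).mulVec (cosv η))
    + (1 : Vec m) ⬝ᵥ (Gam ep1 ep2 B Vb).mulVec (cosv ηb)
    - ((Gam ep1 ep2 B Vb).mulVec (sinv ηb)) ⬝ᵥ (η - ηb)
    - Efd ⬝ᵥ (V - Vb)
    + (1 / 2) * (V ⬝ᵥ (Fmat Bii Xd Xd').mulVec V)
    - (1 / 2) * (Vb ⬝ᵥ (Fmat Bii Xd Xd').mulVec Vb)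

/-- entrywise absolute value `|D|` of the incidence matrix. -/
def absD {n m : ℕ} (ep1 ep2 : Fin m → Fin n) : Matrix (Fin n) (Fin m) ℝ :=
  Matrix.of fun i k => |incD ep1 ep2 i k|

/-- The matrix `E(η̄) − diag(V̄)⁻¹|D|Γ(V̄)diag(sin η̄)diag(cos η̄)⁻¹diag(sin η̄)|D|ᵀdiag(V̄)⁻¹`
appearing in Assumption 3. -/
def Schur {n m : ℕ} (ep1 ep2 : Fin m → Fin n) (B : Fin m → ℝ) (Bii Xd Xd' : Vec n)
    (ηb : Vec m) (Vb : Vec n) : Matrix (Fin n) (Fin n) ℝ :=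
  Emat ep1 ep2 B Bii Xd Xd' ηb -
    (Matrix.diagonal fun i => (Vb i)⁻¹) * absD ep1 ep2 * Gam ep1 ep2 B Vb *
      Matrix.diagonal (sinv ηb) * (Matrix.diagonal (cosv ηb))⁻¹ *
      Matrix.diagonal (sinv ηb) * (absD ep1 ep2)ᵀ * (Matrix.diagonal fun i => (Vb i)⁻¹)

section Helpers

lemma incD_key {n m : ℕ} (ep1 ep2 : Fin m → Fin n) (hep : ∀ k, ep1 k ≠ ep2 k)
    (k : Fin m) (f : Fin n → ℝ) (i : Fin n) :
    (if i = ep1 k then (1:ℝ) else if i = ep2 k then -1 else 0) * f i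
      = (if ep1 k = i then f i else 0) + (if ep2 k = i then -(f i) else 0) := by
  by_cases h1 : i = ep1 k
  · subst h1
    simp [Ne.symm (hep k)]
  · by_cases h2 : i = ep2 k
    · subst h2
      simp [h1, hep k, Ne.symm h1]
    · simp [h1, h2, Ne.symm h1, Ne.symm h2]

lemma dot_incD_mulVec {n m : ℕ} (ep1 ep2 : Fin m → Fin n) (hep : ∀ k, ep1 k ≠ ep2 k)
    (w : Vec n) (y : Vec m) :
    w ⬝ᵥ (incD ep1 ep2).mulVec y = ∑ k, (w (ep1 k) - w (ep2 k)) * y k := by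
  simp only [dotProduct, mulVec, incD, Matrix.of_apply, Finset.mul_sum]
  rw [Finset.sum_comm]
  refine Finset.sum_congr rfl fun k _ => ?_
  have key := fun i => incD_key ep1 ep2 hep k (fun i => w i * y k) i
  simp only [show ∀ i, w i * ((if i = ep1 k then (1:ℝ) else if i = ep2 k then -1 else 0) * y k)
      = (if i = ep1 k then (1:ℝ) else if i = ep2 k then -1 else 0) * (w i * y k)
    from fun i => by ring, key, Finset.sum_add_distrib, Finset.sum_ite_eq, Finset.mem_univ, if_true]
  ring

lemma transpose_incD_mulVec {n m : ℕ} (ep1 ep2 : Fin m → Fin n) (hep : ∀ k, ep1 k ≠ ep2 k)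
    (w : Vec n) (k : Fin m) :
    (incD ep1 ep2)ᵀ.mulVec w k = w (ep1 k) - w (ep2 k) := by
  simp only [mulVec, dotProduct, transpose_apply, incD, Matrix.of_apply]
  simp only [incD_key ep1 ep2 hep k w, Finset.sum_add_distrib, Finset.sum_ite_eq,
    Finset.mem_univ, if_true]
  ring

lemma Emat_mulVec_apply {n m : ℕ} (ep1 ep2 : Fin m → Fin n) (hep : ∀ k, ep1 k ≠ ep2 k)
    (B : Fin m → ℝ) (Bii Xd Xd' : Vec n) (η : Vec m) (V : Vec n) (i : Fin n) :
    (Emat ep1 ep2 B Bii Xd Xd' η).mulVec V i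
      = (1 - Bii i * (Xd i - Xd' i)) / (Xd i - Xd' i) * V i
        - ∑ k, ((if ep1 k = i then B k * Real.cos (η k) * V (ep2 k) else 0)
              + (if ep2 k = i then B k * Real.cos (η k) * V (ep1 k) else 0)) := by
  simp only [mulVec, dotProduct, Emat, Matrix.of_apply]
  have key2 : ∀ j : Fin n,
      (if i = j then (1 - Bii i * (Xd i - Xd' i)) / (Xd i - Xd' i)
        else -∑ k, (if (ep1 k = i ∧ ep2 k = j) ∨ (ep1 k = j ∧ ep2 k = i)
          then B k * Real.cos (η k) else 0)) * V j
      = (if i = j then (1 - Bii i * (Xd i - Xd' i)) / (Xd i - Xd' i) * V j else 0)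
        - ∑ k, (if ep2 k = j then (if ep1 k = i then B k * Real.cos (η k) * V j else 0) else 0)
        - ∑ k, (if ep1 k = j then (if ep2 k = i then B k * Real.cos (η k) * V j else 0) else 0) := by
    intro j
    by_cases hij : i = j
    · subst hij
      rw [if_pos rfl, if_pos rfl]
      have s1 : ∑ k, (if ep2 k = i then (if ep1 k = i then B k * Real.cos (η k) * V i else 0) else 0) = 0 :=
        Finset.sum_eq_zero fun k _ => by
          by_cases h2 : ep2 k = i
          · rw [if_pos h2, if_neg (fun h1 => hep k (h1.trans h2.symm))]
          · rw [if_neg h2]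
      have s2 : ∑ k, (if ep1 k = i then (if ep2 k = i then B k * Real.cos (η k) * V i else 0) else 0) = 0 :=
        Finset.sum_eq_zero fun k _ => by
          by_cases h1 : ep1 k = i
          · rw [if_pos h1, if_neg (fun h2 => hep k (h1.trans h2.symm))]
          · rw [if_neg h1]
      rw [s1, s2]; ring
    · rw [if_neg hij, if_neg hij, neg_mul, Finset.sum_mul]
      have split : ∀ k, (if (ep1 k = i ∧ ep2 k = j) ∨ (ep1 k = j ∧ ep2 k = i)
            then B k * Real.cos (η k) else 0) * V j
          = (if ep2 k = j then (if ep1 k = i then B k * Real.cos (η k) * V j else 0) else 0)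
            + (if ep1 k = j then (if ep2 k = i then B k * Real.cos (η k) * V j else 0) else 0) := by
        intro k
        by_cases hA : ep1 k = i ∧ ep2 k = j
        · rw [if_pos (Or.inl hA), if_pos hA.2, if_pos hA.1, if_neg (fun h1 => hij (hA.1.symm.trans h1))]
          ring
        · by_cases hB : ep1 k = j ∧ ep2 k = i
          · rw [if_pos (Or.inr hB), if_neg (show ¬ ep2 k = j from fun h2 => hij (hB.2.symm.trans h2)),
              if_pos hB.1, if_pos hB.2]
            ring
          · rw [if_neg (fun h => h.elim hA hB), zero_mul]
            have e1 : (if ep2 k = j then (if ep1 k = i then B k * Real.cos (η k) * V j else 0) else 0) = 0 := by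
              by_cases h2 : ep2 k = j
              · rw [if_pos h2, if_neg (fun h1 => hA ⟨h1, h2⟩)]
              · rw [if_neg h2]
            have e2 : (if ep1 k = j then (if ep2 k = i then B k * Real.cos (η k) * V j else 0) else 0) = 0 := by
              by_cases h1 : ep1 k = j
              · rw [if_pos h1, if_neg (fun h2 => hB ⟨h1, h2⟩)]
              · rw [if_neg h1]
            rw [e1, e2, add_zero]
      rw [Finset.sum_congr rfl (fun k _ => split k), Finset.sum_add_distrib]
      ring
  rw [Finset.sum_congr rfl (fun j _ => key2 j)]
  rw [Finset.sum_sub_distrib, Finset.sum_sub_distrib, Finset.sum_ite_eq, if_pos (Finset.mem_univ i)]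
  have c1 : (∑ x : Fin n, ∑ k : Fin m, if ep2 k = x then (if ep1 k = i then B k * Real.cos (η k) * V x else 0) else 0)
      = ∑ k : Fin m, ∑ x : Fin n, if ep2 k = x then (if ep1 k = i then B k * Real.cos (η k) * V x else 0) else 0 :=
    Finset.sum_comm
  have c2 : (∑ x : Fin n, ∑ k : Fin m, if ep1 k = x then (if ep2 k = i then B k * Real.cos (η k) * V x else 0) else 0)
      = ∑ k : Fin m, ∑ x : Fin n, if ep1 k = x then (if ep2 k = i then B k * Real.cos (η k) * V x else 0) else 0 :=
    Finset.sum_comm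
  rw [c1, c2]
  simp only [Finset.sum_ite_eq, Finset.mem_univ, if_true, Finset.sum_add_distrib]
  ring

lemma dot_Emat_mulVec {n m : ℕ} (ep1 ep2 : Fin m → Fin n) (hep : ∀ k, ep1 k ≠ ep2 k)
    (B : Fin m → ℝ) (Bii Xd Xd' : Vec n) (η : Vec m) (x V : Vec n) :
    x ⬝ᵥ (Emat ep1 ep2 B Bii Xd Xd' η).mulVec V
      = ∑ i, (1 - Bii i * (Xd i - Xd' i)) / (Xd i - Xd' i) * (x i * V i)
        - ∑ k, B k * Real.cos (η k) * (x (ep1 k) * V (ep2 k) + x (ep2 k) * V (ep1 k)) := by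
  simp only [dotProduct, Emat_mulVec_apply ep1 ep2 hep B Bii Xd Xd' η V,
    mul_sub, Finset.sum_sub_distrib, Finset.mul_sum, mul_add, mul_ite, mul_zero]
  have c1 : (∑ i : Fin n, ∑ k : Fin m,
        ((if ep1 k = i then x i * (B k * Real.cos (η k) * V (ep2 k)) else 0)
          + (if ep2 k = i then x i * (B k * Real.cos (η k) * V (ep1 k)) else 0)))
      = ∑ k : Fin m, ∑ i : Fin n,
        ((if ep1 k = i then x i * (B k * Real.cos (η k) * V (ep2 k)) else 0)
          + (if ep2 k = i then x i * (B k * Real.cos (η k) * V (ep1 k)) else 0)) :=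
    Finset.sum_comm
  rw [c1]
  simp only [Finset.sum_add_distrib, Finset.sum_ite_eq, Finset.mem_univ, if_true]
  congr 1
  · exact Finset.sum_congr rfl fun i _ => by ring
  · congr 1
    · exact Finset.sum_congr rfl fun k _ => by ring
    · exact Finset.sum_congr rfl fun k _ => by ring

end Helpers

open MeasureTheory in
/-- Remark 9: robustness of the closed loop to an additional `L²`
disturbance `Qˡ`: for every `0 < ε < 2 minᵢ Aᵢ`, along any solution,
`Ż ≤ −ωᵀ(A − (ε/2)I)ω − ‖E(η)V − Ē_fd‖²_{T⁻¹} − (θ − θ̄)ᵀL_comm(θ − θ̄) + (1/(2ε))‖Qˡ‖²`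
and hence `Z(t) ≤ Z(0) + (1/(2ε))∫₀ᵗ‖Qˡ(s)‖² ds`. -/
theorem closed_loop_L2_robustness
    {n m : ℕ} (ep1 ep2 : Fin m → Fin n) (hep : ∀ k, ep1 k ≠ ep2 k)
    (B : Fin m → ℝ) (hB : ∀ k, 0 < B k)
    (Bii Xd Xd' : Vec n)
    (Md Ad Td : Vec n) (hM : ∀ i, 0 < Md i) (hA : ∀ i, 0 < Ad i) (hT : ∀ i, 0 < Td i)
    (q : Vec n) (hq : ∀ i, 0 < q i)
    (G : SimpleGraph (Fin n)) [DecidableRel G.Adj] (hG : G.Connected)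
    (Efd Pl : Vec n)
    (ηb : Vec m) (Vb : Vec n)
    (heq2 : (0 : Vec n) = (fun i => (q i)⁻¹ * ((∑ j, Pl j) / (∑ j, (q j)⁻¹)))
      - (incD ep1 ep2).mulVec ((Gam ep1 ep2 B Vb).mulVec (sinv ηb)) - Pl)
    (heq3 : (Emat ep1 ep2 B Bii Xd Xd' ηb).mulVec Vb = Efd)
    -- the disturbance, with finite L² norm on `[0, ∞)`
    (Ql : ℝ → Vec n)
    (hL2 : IntegrableOn (fun s => ∑ i, (Ql s i) ^ 2) (Set.Ici (0:ℝ)))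
    (η : ℝ → Vec m) (ω ω' V V' θ : ℝ → Vec n)
    (hη : ∀ t, HasDerivAt η ((incD ep1 ep2)ᵀ.mulVec (ω t)) t)
    (hω : ∀ t, HasDerivAt ω (ω' t) t)
    (hωdyn : ∀ t, (Matrix.diagonal Md).mulVec (ω' t)
      = (Matrix.diagonal fun i => (q i)⁻¹).mulVec (θ t)
        - (incD ep1 ep2).mulVec ((Gam ep1 ep2 B (V t)).mulVec (sinv (η t)))
        - (Matrix.diagonal Ad).mulVec (ω t) - Pl - Ql t)
    (hV : ∀ t, HasDerivAt V (V' t) t)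
    (hVdyn : ∀ t, (Matrix.diagonal Td).mulVec (V' t)
      = -(Emat ep1 ep2 B Bii Xd Xd' (η t)).mulVec (V t) + Efd)
    (hθ : ∀ t, HasDerivAt θ
      (-(G.lapMatrix ℝ).mulVec (θ t)
        - (Matrix.diagonal fun i => (q i)⁻¹).mulVec (ω t)) t)
    (ε : ℝ) (hε0 : 0 < ε) (hε : ∀ i, ε < 2 * Ad i) :
    (∀ t, HasDerivAt
        (fun s => (1 / 2) * (ω s ⬝ᵥ (Matrix.diagonal Md).mulVec (ω s))
          + W2 ep1 ep2 B Bii Xd Xd' Efd ηb Vb (η s) (V s)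
          + (1 / 2) * ((θ s - fun _ => (∑ j, Pl j) / (∑ j, (q j)⁻¹))
              ⬝ᵥ (θ s - fun _ => (∑ j, Pl j) / (∑ j, (q j)⁻¹))))
        (-(ω t ⬝ᵥ (Matrix.diagonal Ad).mulVec (ω t))
          - (((Emat ep1 ep2 B Bii Xd Xd' (η t)).mulVec (V t) - Efd) ⬝ᵥ
              (Matrix.diagonal fun i => (Td i)⁻¹).mulVec
                ((Emat ep1 ep2 B Bii Xd Xd' (η t)).mulVec (V t) - Efd))
          - ((θ t - fun _ => (∑ j, Pl j) / (∑ j, (q j)⁻¹))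
              ⬝ᵥ (G.lapMatrix ℝ).mulVec
                (θ t - fun _ => (∑ j, Pl j) / (∑ j, (q j)⁻¹)))
          - ω t ⬝ᵥ Ql t) t ∧
      (-(ω t ⬝ᵥ (Matrix.diagonal Ad).mulVec (ω t))
          - (((Emat ep1 ep2 B Bii Xd Xd' (η t)).mulVec (V t) - Efd) ⬝ᵥ
              (Matrix.diagonal fun i => (Td i)⁻¹).mulVec
                ((Emat ep1 ep2 B Bii Xd Xd' (η t)).mulVec (V t) - Efd))
          - ((θ t - fun _ => (∑ j, Pl j) / (∑ j, (q j)⁻¹))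
              ⬝ᵥ (G.lapMatrix ℝ).mulVec
                (θ t - fun _ => (∑ j, Pl j) / (∑ j, (q j)⁻¹)))
          - ω t ⬝ᵥ Ql t)
        ≤ -(ω t ⬝ᵥ (Matrix.diagonal fun i => Ad i - ε / 2).mulVec (ω t))
          - (((Emat ep1 ep2 B Bii Xd Xd' (η t)).mulVec (V t) - Efd) ⬝ᵥ
              (Matrix.diagonal fun i => (Td i)⁻¹).mulVec
                ((Emat ep1 ep2 B Bii Xd Xd' (η t)).mulVec (V t) - Efd))
          - ((θ t - fun _ => (∑ j, Pl j) / (∑ j, (q j)⁻¹))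
              ⬝ᵥ (G.lapMatrix ℝ).mulVec
                (θ t - fun _ => (∑ j, Pl j) / (∑ j, (q j)⁻¹)))
          + (1 / (2 * ε)) * ∑ i, (Ql t i) ^ 2) ∧
    (∀ t ≥ (0:ℝ),
      ((1 / 2) * (ω t ⬝ᵥ (Matrix.diagonal Md).mulVec (ω t))
        + W2 ep1 ep2 B Bii Xd Xd' Efd ηb Vb (η t) (V t)
        + (1 / 2) * ((θ t - fun _ => (∑ j, Pl j) / (∑ j, (q j)⁻¹))
            ⬝ᵥ (θ t - fun _ => (∑ j, Pl j) / (∑ j, (q j)⁻¹))))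
      ≤ ((1 / 2) * (ω 0 ⬝ᵥ (Matrix.diagonal Md).mulVec (ω 0))
        + W2 ep1 ep2 B Bii Xd Xd' Efd ηb Vb (η 0) (V 0)
        + (1 / 2) * ((θ 0 - fun _ => (∑ j, Pl j) / (∑ j, (q j)⁻¹))
            ⬝ᵥ (θ 0 - fun _ => (∑ j, Pl j) / (∑ j, (q j)⁻¹))))
        + (1 / (2 * ε)) * ∫ s in Set.Ioc (0:ℝ) t, ∑ i, (Ql s i) ^ 2) := by
    classical
  have hωi : ∀ t i, HasDerivAt (fun s => ω s i) (ω' t i) t := fun t i => hasDerivAt_pi.1 (hω t) i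
  have hVi : ∀ t i, HasDerivAt (fun s => V s i) (V' t i) t := fun t i => hasDerivAt_pi.1 (hV t) i
  have hηk : ∀ t k, HasDerivAt (fun s => η s k) ((incD ep1 ep2)ᵀ.mulVec (ω t) k) t :=
    fun t k => hasDerivAt_pi.1 (hη t) k
  have hθi : ∀ t i, HasDerivAt (fun s => θ s i)
      ((-(G.lapMatrix ℝ).mulVec (θ t) - (Matrix.diagonal fun i => (q i)⁻¹).mulVec (ω t)) i) t :=
    fun t i => hasDerivAt_pi.1 (hθ t) i
  set c : ℝ := (∑ j, Pl j) / (∑ j, (q j)⁻¹) with hcdef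
  have hmain : ∀ t, HasDerivAt
      (fun s => (1 / 2) * (ω s ⬝ᵥ (Matrix.diagonal Md).mulVec (ω s))
          + W2 ep1 ep2 B Bii Xd Xd' Efd ηb Vb (η s) (V s)
          + (1 / 2) * ((θ s - fun _ => c) ⬝ᵥ (θ s - fun _ => c)))
      (-(ω t ⬝ᵥ (Matrix.diagonal Ad).mulVec (ω t))
          - (((Emat ep1 ep2 B Bii Xd Xd' (η t)).mulVec (V t) - Efd) ⬝ᵥ
              (Matrix.diagonal fun i => (Td i)⁻¹).mulVec
                ((Emat ep1 ep2 B Bii Xd Xd' (η t)).mulVec (V t) - Efd))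
          - ((θ t - fun _ => c) ⬝ᵥ (G.lapMatrix ℝ).mulVec (θ t - fun _ => c))
          - ω t ⬝ᵥ Ql t) t := by
    intro t
    have h1 := HasDerivAt.sum (u := Finset.univ) (fun (i : Fin n) _ =>
      HasDerivAt.const_mul (1/2 : ℝ) ((hωi t i).mul ((hωi t i).const_mul (Md i))))
    have hu1 := HasDerivAt.sum (u := Finset.univ) (fun (k : Fin m) _ =>
      (((hVi t (ep1 k)).mul (hVi t (ep2 k))).mul_const (B k)).mul ((hηk t k).cos))
    have hu2 := HasDerivAt.sum (u := Finset.univ) (fun (k : Fin m) _ =>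
      HasDerivAt.const_mul (Vb (ep1 k) * Vb (ep2 k) * B k * Real.sin (ηb k))
        ((hηk t k).sub_const (ηb k)))
    have hu3 := HasDerivAt.sum (u := Finset.univ) (fun (i : Fin n) _ =>
      HasDerivAt.const_mul (Efd i) ((hVi t i).sub_const (Vb i)))
    have hu4 := HasDerivAt.sum (u := Finset.univ) (fun (i : Fin n) _ =>
      HasDerivAt.const_mul (1/2 : ℝ)
        ((hVi t i).mul ((hVi t i).const_mul ((1 - Bii i * (Xd i - Xd' i)) / (Xd i - Xd' i)))))
    have h3 := HasDerivAt.sum (u := Finset.univ) (fun (i : Fin n) _ =>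
      HasDerivAt.const_mul (1/2 : ℝ) (((hθi t i).sub_const c).mul ((hθi t i).sub_const c)))
    have hD := (h1.add ((((hu1.neg.sub hu2).sub hu3).add hu4).add_const
      ((∑ k, Vb (ep1 k) * Vb (ep2 k) * B k * Real.cos (ηb k))
        - ∑ i, 1 / 2 * (Vb i * ((1 - Bii i * (Xd i - Xd' i)) / (Xd i - Xd' i) * Vb i))))).add h3
    have hfun : (fun s => (1 / 2) * (ω s ⬝ᵥ (Matrix.diagonal Md).mulVec (ω s))
          + W2 ep1 ep2 B Bii Xd Xd' Efd ηb Vb (η s) (V s)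
          + (1 / 2) * ((θ s - fun _ => c) ⬝ᵥ (θ s - fun _ => c)))
        = (fun s => (∑ i, 1 / 2 * (ω s i * (Md i * ω s i)))
          + ((-(∑ k, V s (ep1 k) * V s (ep2 k) * B k * Real.cos (η s k))
              - ∑ k, Vb (ep1 k) * Vb (ep2 k) * B k * Real.sin (ηb k) * (η s k - ηb k)
              - ∑ i, Efd i * (V s i - Vb i)
              + ∑ i, 1 / 2 * (V s i * ((1 - Bii i * (Xd i - Xd' i)) / (Xd i - Xd' i) * V s i)))
            + ((∑ k, Vb (ep1 k) * Vb (ep2 k) * B k * Real.cos (ηb k))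
              - ∑ i, 1 / 2 * (Vb i * ((1 - Bii i * (Xd i - Xd' i)) / (Xd i - Xd' i) * Vb i))))
          + ∑ i, 1 / 2 * ((θ s i - c) * (θ s i - c))) := by
      funext s
      simp only [W2, Gam, Fmat, sinv, cosv, dotProduct, Matrix.mulVec_diagonal, Pi.sub_apply,
        Pi.one_apply, one_mul, Finset.mul_sum]
      ring
    rw [hfun]
    have hval : (-(ω t ⬝ᵥ (Matrix.diagonal Ad).mulVec (ω t))
          - (((Emat ep1 ep2 B Bii Xd Xd' (η t)).mulVec (V t) - Efd) ⬝ᵥ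
              (Matrix.diagonal fun i => (Td i)⁻¹).mulVec
                ((Emat ep1 ep2 B Bii Xd Xd' (η t)).mulVec (V t) - Efd))
          - ((θ t - fun _ => c) ⬝ᵥ (G.lapMatrix ℝ).mulVec (θ t - fun _ => c))
          - ω t ⬝ᵥ Ql t)
        = ((∑ i, 1 / 2 * (ω' t i * (Md i * ω t i) + ω t i * (Md i * ω' t i)))
          + ((-(∑ k, ((V' t (ep1 k) * V t (ep2 k) + V t (ep1 k) * V' t (ep2 k)) * B k * Real.cos (η t k)
                  + V t (ep1 k) * V t (ep2 k) * B k * (-Real.sin (η t k) * (incD ep1 ep2)ᵀ.mulVec (ω t) k)))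
              - ∑ k, Vb (ep1 k) * Vb (ep2 k) * B k * Real.sin (ηb k) * (incD ep1 ep2)ᵀ.mulVec (ω t) k
              - ∑ i, Efd i * V' t i
              + ∑ i, 1 / 2 * (V' t i * ((1 - Bii i * (Xd i - Xd' i)) / (Xd i - Xd' i) * V t i)
                  + V t i * ((1 - Bii i * (Xd i - Xd' i)) / (Xd i - Xd' i) * V' t i))))
          + ∑ i, 1 / 2 * ((-(G.lapMatrix ℝ).mulVec (θ t) - (Matrix.diagonal fun i => (q i)⁻¹).mulVec (ω t)) i * (θ t i - c)
              + (θ t i - c) * (-(G.lapMatrix ℝ).mulVec (θ t) - (Matrix.diagonal fun i => (q i)⁻¹).mulVec (ω t)) i)) := by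
      have rA : ω t ⬝ᵥ (Matrix.diagonal Ad).mulVec (ω t) = ∑ i, ω t i * (Ad i * ω t i) := by
        simp [dotProduct, Matrix.mulVec_diagonal]
      have rQ : ω t ⬝ᵥ Ql t = ∑ i, ω t i * Ql t i := rfl
      have hdη : ∀ k, (incD ep1 ep2)ᵀ.mulVec (ω t) k = ω t (ep1 k) - ω t (ep2 k) :=
        transpose_incD_mulVec ep1 ep2 hep (ω t)
      have hMd : ∀ i, Md i * ω' t i
          = (q i)⁻¹ * θ t i
            - (incD ep1 ep2).mulVec ((Gam ep1 ep2 B (V t)).mulVec (sinv (η t))) i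
            - Ad i * ω t i - Pl i - Ql t i := by
        intro i
        have h0 := congrFun (hωdyn t) i
        simpa [Matrix.mulVec_diagonal] using h0
      have hgam : ∀ k, (Gam ep1 ep2 B (V t)).mulVec (sinv (η t)) k
          = V t (ep1 k) * V t (ep2 k) * B k * Real.sin (η t k) := by
        intro k; simp [Gam, Matrix.mulVec_diagonal, sinv, mul_comm, mul_assoc, mul_left_comm]
      have hDdot : ω t ⬝ᵥ (incD ep1 ep2).mulVec ((Gam ep1 ep2 B (V t)).mulVec (sinv (η t)))
          = ∑ k, (ω t (ep1 k) - ω t (ep2 k)) * (V t (ep1 k) * V t (ep2 k) * B k * Real.sin (η t k)) := by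
        rw [dot_incD_mulVec ep1 ep2 hep]
        exact Finset.sum_congr rfl fun k _ => by rw [hgam k]
      have eKin : ∑ i, 1 / 2 * (ω' t i * (Md i * ω t i) + ω t i * (Md i * ω' t i))
          = ∑ i, ω t i * ((q i)⁻¹ * θ t i)
            - ∑ k, (ω t (ep1 k) - ω t (ep2 k)) * (V t (ep1 k) * V t (ep2 k) * B k * Real.sin (η t k))
            - ∑ i, ω t i * (Ad i * ω t i) - ∑ i, ω t i * Pl i - ∑ i, ω t i * Ql t i := by
        rw [← hDdot]
        have hterm : ∀ i, 1 / 2 * (ω' t i * (Md i * ω t i) + ω t i * (Md i * ω' t i))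
            = ω t i * ((q i)⁻¹ * θ t i)
              - ω t i * ((incD ep1 ep2).mulVec ((Gam ep1 ep2 B (V t)).mulVec (sinv (η t))) i)
              - ω t i * (Ad i * ω t i) - ω t i * Pl i - ω t i * Ql t i := by
          intro i
          have h1 : 1 / 2 * (ω' t i * (Md i * ω t i) + ω t i * (Md i * ω' t i))
              = ω t i * (Md i * ω' t i) := by ring
          rw [h1, hMd i]; ring
        rw [Finset.sum_congr rfl fun i _ => hterm i]
        simp only [Finset.sum_sub_distrib]
        rfl
      have hPl : ∀ i, Pl i = (q i)⁻¹ * c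
          - (incD ep1 ep2).mulVec ((Gam ep1 ep2 B Vb).mulVec (sinv ηb)) i := by
        intro i
        have h0 := congrFun heq2 i
        simp only [Pi.sub_apply, Pi.zero_apply] at h0
        linarith [h0]
      have hgb : ∀ k, (Gam ep1 ep2 B Vb).mulVec (sinv ηb) k
          = Vb (ep1 k) * Vb (ep2 k) * B k * Real.sin (ηb k) := by
        intro k; simp [Gam, Matrix.mulVec_diagonal, sinv, mul_comm, mul_assoc, mul_left_comm]
      have ePl : ∑ i, ω t i * Pl i
          = ∑ i, ω t i * ((q i)⁻¹ * c)
            - ∑ k, (ω t (ep1 k) - ω t (ep2 k)) * (Vb (ep1 k) * Vb (ep2 k) * B k * Real.sin (ηb k)) := by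
        have h1 : ∑ i, ω t i * Pl i
            = ∑ i, (ω t i * ((q i)⁻¹ * c)
              - ω t i * ((incD ep1 ep2).mulVec ((Gam ep1 ep2 B Vb).mulVec (sinv ηb)) i)) :=
          Finset.sum_congr rfl fun i _ => by rw [hPl i]; ring
        rw [h1, Finset.sum_sub_distrib]
        congr 1
        have h2 : ∑ i, ω t i * ((incD ep1 ep2).mulVec ((Gam ep1 ep2 B Vb).mulVec (sinv ηb)) i)
            = ω t ⬝ᵥ (incD ep1 ep2).mulVec ((Gam ep1 ep2 B Vb).mulVec (sinv ηb)) := rfl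
        rw [h2, dot_incD_mulVec ep1 ep2 hep]
        exact Finset.sum_congr rfl fun k _ => by rw [hgb k]
      have eU1 : ∑ k, ((V' t (ep1 k) * V t (ep2 k) + V t (ep1 k) * V' t (ep2 k)) * B k * Real.cos (η t k)
              + V t (ep1 k) * V t (ep2 k) * B k * (-Real.sin (η t k) * (incD ep1 ep2)ᵀ.mulVec (ω t) k))
          = ∑ k, (V' t (ep1 k) * V t (ep2 k) + V t (ep1 k) * V' t (ep2 k)) * B k * Real.cos (η t k)
            - ∑ k, (ω t (ep1 k) - ω t (ep2 k)) * (V t (ep1 k) * V t (ep2 k) * B k * Real.sin (η t k)) := by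
        rw [← Finset.sum_sub_distrib]
        exact Finset.sum_congr rfl fun k _ => by rw [hdη k]; ring
      have eU2 : ∑ k, Vb (ep1 k) * Vb (ep2 k) * B k * Real.sin (ηb k) * (incD ep1 ep2)ᵀ.mulVec (ω t) k
          = ∑ k, (ω t (ep1 k) - ω t (ep2 k)) * (Vb (ep1 k) * Vb (ep2 k) * B k * Real.sin (ηb k)) :=
        Finset.sum_congr rfl fun k _ => by rw [hdη k]; ring
      have hV' : ∀ i, V' t i
          = (Td i)⁻¹ * (Efd i - (Emat ep1 ep2 B Bii Xd Xd' (η t)).mulVec (V t) i) := by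
        intro i
        have h0 := congrFun (hVdyn t) i
        simp only [Matrix.mulVec_diagonal, Pi.add_apply, Pi.neg_apply] at h0
        have h1 : (Td i)⁻¹ * (Td i * V' t i) = V' t i := inv_mul_cancel_left₀ (hT i).ne' _
        rw [← h1, h0]; ring
      have eEV : -(∑ k, (V' t (ep1 k) * V t (ep2 k) + V t (ep1 k) * V' t (ep2 k)) * B k * Real.cos (η t k))
            - ∑ i, Efd i * V' t i
            + ∑ i, 1 / 2 * (V' t i * ((1 - Bii i * (Xd i - Xd' i)) / (Xd i - Xd' i) * V t i)
                + V t i * ((1 - Bii i * (Xd i - Xd' i)) / (Xd i - Xd' i) * V' t i))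
          = -(((Emat ep1 ep2 B Bii Xd Xd' (η t)).mulVec (V t) - Efd) ⬝ᵥ
              (Matrix.diagonal fun i => (Td i)⁻¹).mulVec
                ((Emat ep1 ep2 B Bii Xd Xd' (η t)).mulVec (V t) - Efd)) := by
        have hdot := dot_Emat_mulVec ep1 ep2 hep B Bii Xd Xd' (η t) (V' t) (V t)
        have lhs1 : -(∑ k, (V' t (ep1 k) * V t (ep2 k) + V t (ep1 k) * V' t (ep2 k)) * B k * Real.cos (η t k))
              - ∑ i, Efd i * V' t i
              + ∑ i, 1 / 2 * (V' t i * ((1 - Bii i * (Xd i - Xd' i)) / (Xd i - Xd' i) * V t i)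
                  + V t i * ((1 - Bii i * (Xd i - Xd' i)) / (Xd i - Xd' i) * V' t i))
            = V' t ⬝ᵥ (Emat ep1 ep2 B Bii Xd Xd' (η t)).mulVec (V t) - ∑ i, Efd i * V' t i := by
          rw [hdot]
          have c1 : ∑ i, 1 / 2 * (V' t i * ((1 - Bii i * (Xd i - Xd' i)) / (Xd i - Xd' i) * V t i)
                  + V t i * ((1 - Bii i * (Xd i - Xd' i)) / (Xd i - Xd' i) * V' t i))
              = ∑ i, (1 - Bii i * (Xd i - Xd' i)) / (Xd i - Xd' i) * (V' t i * V t i) :=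
            Finset.sum_congr rfl fun i _ => by ring
          have c2 : ∑ k, (V' t (ep1 k) * V t (ep2 k) + V t (ep1 k) * V' t (ep2 k)) * B k * Real.cos (η t k)
              = ∑ k, B k * Real.cos (η t k) * (V' t (ep1 k) * V t (ep2 k) + V' t (ep2 k) * V t (ep1 k)) :=
            Finset.sum_congr rfl fun k _ => by ring
          rw [c1, c2]; ring
        rw [lhs1]
        simp only [dotProduct, Matrix.mulVec_diagonal, Pi.sub_apply]
        rw [← Finset.sum_sub_distrib, ← Finset.sum_neg_distrib]
        refine Finset.sum_congr rfl fun i _ => ?_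
        rw [hV' i]; ring
      have hLθ : (G.lapMatrix ℝ).mulVec (θ t) = (G.lapMatrix ℝ).mulVec (θ t - fun _ => c) := by
        rw [Matrix.mulVec_sub]
        have hz : (G.lapMatrix ℝ).mulVec (fun _ : Fin n => c) = 0 := by
          have h1 : (fun _ : Fin n => c) = c • (fun _ : Fin n => (1:ℝ)) := by
            funext x; simp
          rw [h1, Matrix.mulVec_smul, SimpleGraph.lapMatrix_mulVec_const_eq_zero, smul_zero]
        rw [hz, sub_zero]
      have eTh : ∑ i, 1 / 2 * ((-(G.lapMatrix ℝ).mulVec (θ t) - (Matrix.diagonal fun i => (q i)⁻¹).mulVec (ω t)) i * (θ t i - c)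
              + (θ t i - c) * (-(G.lapMatrix ℝ).mulVec (θ t) - (Matrix.diagonal fun i => (q i)⁻¹).mulVec (ω t)) i)
          = -((θ t - fun _ => c) ⬝ᵥ (G.lapMatrix ℝ).mulVec (θ t - fun _ => c))
            - (∑ i, ω t i * ((q i)⁻¹ * θ t i) - ∑ i, ω t i * ((q i)⁻¹ * c)) := by
        have hterm : ∀ i, 1 / 2 * ((-(G.lapMatrix ℝ).mulVec (θ t) - (Matrix.diagonal fun i => (q i)⁻¹).mulVec (ω t)) i * (θ t i - c)
              + (θ t i - c) * (-(G.lapMatrix ℝ).mulVec (θ t) - (Matrix.diagonal fun i => (q i)⁻¹).mulVec (ω t)) i)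
            = -((θ t i - c) * ((G.lapMatrix ℝ).mulVec (θ t - fun _ => c)) i)
              - (ω t i * ((q i)⁻¹ * θ t i) - ω t i * ((q i)⁻¹ * c)) := by
          intro i
          rw [hLθ]
          simp only [Pi.sub_apply, Pi.neg_apply, Matrix.mulVec_diagonal]
          ring
        rw [Finset.sum_congr rfl fun i _ => hterm i]
        simp only [Finset.sum_sub_distrib, Finset.sum_neg_distrib]
        rfl
      linear_combination -rA - rQ - eKin + eU1 + eU2 - eEV - eTh + ePl
    rw [hval]
    exact hD.congr_of_eventuallyEq (Filter.Eventually.of_forall fun s => by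
      simp only [Pi.add_apply, Finset.sum_apply, Pi.mul_apply, Pi.sub_apply, Pi.neg_apply])
  have hbound : ∀ t,
      (-(ω t ⬝ᵥ (Matrix.diagonal Ad).mulVec (ω t))
          - (((Emat ep1 ep2 B Bii Xd Xd' (η t)).mulVec (V t) - Efd) ⬝ᵥ
              (Matrix.diagonal fun i => (Td i)⁻¹).mulVec
                ((Emat ep1 ep2 B Bii Xd Xd' (η t)).mulVec (V t) - Efd))
          - ((θ t - fun _ => c) ⬝ᵥ (G.lapMatrix ℝ).mulVec (θ t - fun _ => c))
          - ω t ⬝ᵥ Ql t)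
        ≤ -(ω t ⬝ᵥ (Matrix.diagonal fun i => Ad i - ε / 2).mulVec (ω t))
          - (((Emat ep1 ep2 B Bii Xd Xd' (η t)).mulVec (V t) - Efd) ⬝ᵥ
              (Matrix.diagonal fun i => (Td i)⁻¹).mulVec
                ((Emat ep1 ep2 B Bii Xd Xd' (η t)).mulVec (V t) - Efd))
          - ((θ t - fun _ => c) ⬝ᵥ (G.lapMatrix ℝ).mulVec (θ t - fun _ => c))
          + (1 / (2 * ε)) * ∑ i, (Ql t i) ^ 2 := by
    intro t
    have key : -(ω t ⬝ᵥ (Matrix.diagonal Ad).mulVec (ω t)) - ω t ⬝ᵥ Ql t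
        ≤ -(ω t ⬝ᵥ (Matrix.diagonal fun i => Ad i - ε / 2).mulVec (ω t))
          + (1 / (2 * ε)) * ∑ i, (Ql t i) ^ 2 := by
      have h1 : ω t ⬝ᵥ (Matrix.diagonal Ad).mulVec (ω t) = ∑ i, ω t i * (Ad i * ω t i) := by
        simp [dotProduct, Matrix.mulVec_diagonal]
      have h2 : ω t ⬝ᵥ (Matrix.diagonal fun i => Ad i - ε / 2).mulVec (ω t)
          = ∑ i, ω t i * ((Ad i - ε / 2) * ω t i) := by
        simp [dotProduct, Matrix.mulVec_diagonal]
      have h3 : ω t ⬝ᵥ Ql t = ∑ i, ω t i * Ql t i := rfl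
      rw [h1, h2, h3, ← Finset.sum_neg_distrib, ← Finset.sum_neg_distrib,
        ← Finset.sum_sub_distrib, Finset.mul_sum, ← Finset.sum_add_distrib]
      refine Finset.sum_le_sum fun i _ => ?_
      have hid : -(ω t i * ((Ad i - ε / 2) * ω t i)) + 1 / (2 * ε) * Ql t i ^ 2
          - (-(ω t i * (Ad i * ω t i)) - ω t i * Ql t i)
          = 1 / (2 * ε) * (ε * ω t i + Ql t i) ^ 2 := by
        field_simp
        ring
      nlinarith [mul_nonneg (le_of_lt (show (0:ℝ) < 1 / (2 * ε) by positivity))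
        (sq_nonneg (ε * ω t i + Ql t i)), hid]
    linarith [key]
  refine ⟨fun t => ⟨hmain t, hbound t⟩, ?_⟩
  intro t ht
  have hcont : ContinuousOn (fun s => (1 / 2) * (ω s ⬝ᵥ (Matrix.diagonal Md).mulVec (ω s))
      + W2 ep1 ep2 B Bii Xd Xd' Efd ηb Vb (η s) (V s)
      + (1 / 2) * ((θ s - fun _ => c) ⬝ᵥ (θ s - fun _ => c))) (Icc 0 t) :=
    fun x _ => ((hmain x).continuousAt).continuousWithinAt
  have hderiv : ∀ x ∈ Ioo 0 t, HasDerivWithinAt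
      (fun s => (1 / 2) * (ω s ⬝ᵥ (Matrix.diagonal Md).mulVec (ω s))
        + W2 ep1 ep2 B Bii Xd Xd' Efd ηb Vb (η s) (V s)
        + (1 / 2) * ((θ s - fun _ => c) ⬝ᵥ (θ s - fun _ => c)))
      ((-(ω x ⬝ᵥ (Matrix.diagonal Ad).mulVec (ω x))
          - (((Emat ep1 ep2 B Bii Xd Xd' (η x)).mulVec (V x) - Efd) ⬝ᵥ
              (Matrix.diagonal fun i => (Td i)⁻¹).mulVec
                ((Emat ep1 ep2 B Bii Xd Xd' (η x)).mulVec (V x) - Efd))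
          - ((θ x - fun _ => c) ⬝ᵥ (G.lapMatrix ℝ).mulVec (θ x - fun _ => c))
          - ω x ⬝ᵥ Ql x)) (Ioi x) x :=
    fun x _ => (hmain x).hasDerivWithinAt
  have φint : IntegrableOn (fun s => 1 / (2 * ε) * ∑ i, Ql s i ^ 2) (Icc 0 t) := by
    exact (hL2.mono_set (Icc_subset_Ici_self)).const_mul _
  have hφg : ∀ x ∈ Ioo 0 t,
      (-(ω x ⬝ᵥ (Matrix.diagonal Ad).mulVec (ω x))
          - (((Emat ep1 ep2 B Bii Xd Xd' (η x)).mulVec (V x) - Efd) ⬝ᵥ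
              (Matrix.diagonal fun i => (Td i)⁻¹).mulVec
                ((Emat ep1 ep2 B Bii Xd Xd' (η x)).mulVec (V x) - Efd))
          - ((θ x - fun _ => c) ⬝ᵥ (G.lapMatrix ℝ).mulVec (θ x - fun _ => c))
          - ω x ⬝ᵥ Ql x) ≤ 1 / (2 * ε) * ∑ i, Ql x i ^ 2 := by
    intro x _
    have h1 := hbound x
    have h2 : (0:ℝ) ≤ ω x ⬝ᵥ (Matrix.diagonal fun i => Ad i - ε / 2).mulVec (ω x) := by
      have : ω x ⬝ᵥ (Matrix.diagonal fun i => Ad i - ε / 2).mulVec (ω x)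
          = ∑ i, ω x i * ((Ad i - ε / 2) * ω x i) := by
        simp [dotProduct, Matrix.mulVec_diagonal]
      rw [this]
      refine Finset.sum_nonneg fun i _ => ?_
      nlinarith [sq_nonneg (ω x i), hε i]
    have h3 : (0:ℝ) ≤ (((Emat ep1 ep2 B Bii Xd Xd' (η x)).mulVec (V x) - Efd) ⬝ᵥ
        (Matrix.diagonal fun i => (Td i)⁻¹).mulVec
          ((Emat ep1 ep2 B Bii Xd Xd' (η x)).mulVec (V x) - Efd)) := by
      have : (((Emat ep1 ep2 B Bii Xd Xd' (η x)).mulVec (V x) - Efd) ⬝ᵥ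
          (Matrix.diagonal fun i => (Td i)⁻¹).mulVec
            ((Emat ep1 ep2 B Bii Xd Xd' (η x)).mulVec (V x) - Efd))
          = ∑ i, ((Emat ep1 ep2 B Bii Xd Xd' (η x)).mulVec (V x) - Efd) i
              * ((Td i)⁻¹ * ((Emat ep1 ep2 B Bii Xd Xd' (η x)).mulVec (V x) - Efd) i) := by
        simp [dotProduct, Matrix.mulVec_diagonal]
      rw [this]
      refine Finset.sum_nonneg fun i _ => ?_
      have := hT i
      nlinarith [sq_nonneg (((Emat ep1 ep2 B Bii Xd Xd' (η x)).mulVec (V x) - Efd) i),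
        inv_nonneg.mpr (hT i).le]
    have h4 : (0:ℝ) ≤ (θ x - fun _ => c) ⬝ᵥ (G.lapMatrix ℝ).mulVec (θ x - fun _ => c) := by
      have := (SimpleGraph.posSemidef_lapMatrix ℝ G).dotProduct_mulVec_nonneg (θ x - fun _ => c)
      simpa using this
    linarith
  have hkey := intervalIntegral.sub_le_integral_of_hasDeriv_right_of_le ht hcont hderiv φint hφg
  have hkey' : ((1 / 2) * (ω t ⬝ᵥ (Matrix.diagonal Md).mulVec (ω t))
        + W2 ep1 ep2 B Bii Xd Xd' Efd ηb Vb (η t) (V t)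
        + (1 / 2) * ((θ t - fun _ => c) ⬝ᵥ (θ t - fun _ => c)))
      - ((1 / 2) * (ω 0 ⬝ᵥ (Matrix.diagonal Md).mulVec (ω 0))
        + W2 ep1 ep2 B Bii Xd Xd' Efd ηb Vb (η 0) (V 0)
        + (1 / 2) * ((θ 0 - fun _ => c) ⬝ᵥ (θ 0 - fun _ => c)))
      ≤ ∫ y in (0:ℝ)..t, 1 / (2 * ε) * ∑ i, Ql y i ^ 2 := hkey
  have hInt : (∫ y in (0:ℝ)..t, 1 / (2 * ε) * ∑ i, Ql y i ^ 2)
      = 1 / (2 * ε) * ∫ s in Set.Ioc (0:ℝ) t, ∑ i, Ql s i ^ 2 := by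
    rw [intervalIntegral.integral_of_le ht, MeasureTheory.integral_const_mul]
  rw [hInt] at hkey'
  linarith [hkey']
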